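/- Let ν ≥ 1 be an integer. For every real p₁ with 0 < p₁ < 2^{−ν}, there exist an integer n ≥ 2 and a source p on {1,…,n} with p(1) = p₁ such that every codeword-length vector l ∈ ℒ_n with R*(l,p) = R*_opt(p) has l(1) > ν. In particular, for 2^{−ν−1} < p₁ < 2^{−ν} one may take n = 2^{ν+1} and p = (p₁, 2^{−ν−1}, …, 2^{−ν−1}, 2^{−ν} − p₁) (with n − 2 middle entries equal to 2^{−ν−1}), and for p₁ = 2^{−ν−1} one may take the uniform distribution on 2^{ν+1} symbols. -/

import Mathlib

/-- A source: a positive, monotonically nonincreasing probability mass function on `Fin n`. -/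
def IsSource (n : ℕ) (p : Fin n → ℝ) : Prop :=
  (∀ i, 0 < p i) ∧ (∑ i, p i = 1) ∧ (∀ i j : Fin n, i ≤ j → p j ≤ p i)

/-- A codeword-length vector: positive integer lengths satisfying the Kraft inequality. -/
def IsCLV (n : ℕ) (l : Fin n → ℤ) : Prop :=
  (∀ i, 1 ≤ l i) ∧ (∑ i, (2:ℝ) ^ (-(l i)) ≤ 1)

/-- Maximum pointwise redundancy `R*(l,p) = max_i (l(i) + lg p(i))`. -/
noncomputable def Rstar (n : ℕ) (l : Fin n → ℤ) (p : Fin n → ℝ) : ℝ :=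
  ⨆ i : Fin n, ((l i : ℝ) + Real.logb 2 (p i))

/-- Minimum maximum pointwise redundancy over all codeword-length vectors. -/
noncomputable def RstarOpt (n : ℕ) (p : Fin n → ℝ) : ℝ :=
  sInf {r : ℝ | ∃ l : Fin n → ℤ, IsCLV n l ∧ Rstar n l p = r}

namespace S16

open Finset

lemma two_zpow_pos (z : ℤ) : (0:ℝ) < 2 ^ z := zpow_pos (by norm_num) z

lemma logb_two_zpow (z : ℤ) : Real.logb 2 ((2:ℝ) ^ z) = z := by
  rw [show ((2:ℝ)^z) = (2:ℝ)^(z:ℝ) from (Real.rpow_intCast 2 z).symm,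
    Real.logb_rpow (by norm_num) (by norm_num)]

/-- index 0 -/
def zi (μ : ℕ) : Fin (2^(μ+1)) := ⟨0, Nat.two_pow_pos _⟩
/-- last index -/
def wi (μ : ℕ) : Fin (2^(μ+1)) := ⟨2^(μ+1) - 1, Nat.sub_lt (Nat.two_pow_pos _) Nat.one_pos⟩

lemma four_le (μ : ℕ) (hμ : 1 ≤ μ) : 4 ≤ 2^(μ+1) := by
  calc (4:ℕ) = 2^2 := by norm_num
  _ ≤ 2^(μ+1) := Nat.pow_le_pow_right (by norm_num) (by omega)

lemma zi_ne_wi (μ : ℕ) : zi μ ≠ wi μ := by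
  have := Nat.one_lt_two_pow_iff (n := μ+1) |>.2 (by omega)
  simp only [zi, wi, Ne, Fin.mk.injEq]
  omega

/-- middle set -/
def mid (μ : ℕ) : Finset (Fin (2^(μ+1))) := (univ.erase (zi μ)).erase (wi μ)

lemma mem_mid {μ : ℕ} {i : Fin (2^(μ+1))} :
    i ∈ mid μ ↔ 0 < i.val ∧ i.val < 2^(μ+1) - 1 := by
  have hi := i.isLt
  simp only [mid, mem_erase, mem_univ, and_true, Ne, Fin.ext_iff, zi, wi]
  omega

lemma card_mid (μ : ℕ) : (mid μ).card = 2^(μ+1) - 2 := by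
  have h2 := Nat.one_lt_two_pow_iff (n := μ+1) |>.2 (by omega)
  rw [mid, card_erase_of_mem, card_erase_of_mem (mem_univ _), card_univ, Fintype.card_fin]
  · omega
  · exact mem_erase.2 ⟨(zi_ne_wi μ).symm, mem_univ _⟩

lemma sum_split (μ : ℕ) (f : Fin (2^(μ+1)) → ℝ) :
    ∑ i, f i = f (zi μ) + f (wi μ) + ∑ i ∈ mid μ, f i := by
  rw [← Finset.add_sum_erase _ f (mem_univ (zi μ)),
    ← Finset.add_sum_erase _ f (mem_erase.2 ⟨(zi_ne_wi μ).symm, mem_univ _⟩)]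
  ring_nf
  rfl

lemma npow_mul_zpow (μ : ℕ) : ((2^(μ+1) : ℕ) : ℝ) * (2:ℝ)^(-(μ:ℤ)-1) = 1 := by
  push_cast
  rw [show (-(μ:ℤ)-1) = -((μ+1 : ℕ):ℤ) by push_cast; ring, zpow_neg, zpow_natCast]
  exact mul_inv_cancel₀ (by positivity)

lemma zpow_split (μ : ℕ) : (2:ℝ)^(-(μ:ℤ)) = 2 * (2:ℝ)^(-(μ:ℤ)-1) := by
  rw [show -(μ:ℤ) = 1 + (-(μ:ℤ)-1) by ring, zpow_add₀ (by norm_num)]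
  norm_num

lemma mid_count (μ : ℕ) :
    ((2^(μ+1) - 2 : ℕ) : ℝ) * (2:ℝ)^(-(μ:ℤ)-1) = 1 - (2:ℝ)^(-(μ:ℤ)) := by
  have h2 := Nat.one_lt_two_pow_iff (n := μ+1) |>.2 (by omega)
  have h1 := npow_mul_zpow μ
  have h3 := zpow_split μ
  rw [Nat.cast_sub (by omega)]
  push_cast at h1 ⊢
  nlinarith [two_zpow_pos (-(μ:ℤ)-1)]

/-- Kraft lemma: if `l 0 ≤ μ` then some middle index has length ≥ μ+2. -/
lemma kraft_lemma (μ : ℕ) (hμ : 1 ≤ μ) (l : Fin (2^(μ+1)) → ℤ)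
    (hl : IsCLV (2^(μ+1)) l) (h0 : l (zi μ) ≤ μ) :
    ∃ i : Fin (2^(μ+1)), i ∈ mid μ ∧ (μ:ℤ) + 2 ≤ l i := by
  by_contra h
  push_neg at h
  have hmidle : ∀ i ∈ mid μ, (2:ℝ)^(-(μ:ℤ)-1) ≤ 2 ^ (-(l i)) := by
    intro i hi
    have := h i hi
    apply zpow_le_zpow_right₀ (by norm_num)
    omega
  have hz : (2:ℝ)^(-(μ:ℤ)) ≤ 2 ^ (-(l (zi μ))) :=
    zpow_le_zpow_right₀ (by norm_num) (by omega)
  have hsum : ∑ i ∈ mid μ, (2:ℝ) ^ (-(l i)) ≥ ((2^(μ+1) - 2 : ℕ) : ℝ) * (2:ℝ)^(-(μ:ℤ)-1) := by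
    rw [← card_mid μ]
    calc ((mid μ).card : ℝ) * (2:ℝ)^(-(μ:ℤ)-1)
        = ∑ _i ∈ mid μ, (2:ℝ)^(-(μ:ℤ)-1) := by rw [Finset.sum_const, nsmul_eq_mul]
      _ ≤ ∑ i ∈ mid μ, (2:ℝ) ^ (-(l i)) := Finset.sum_le_sum hmidle
  have hw : (0:ℝ) < 2 ^ (-(l (wi μ))) := two_zpow_pos _
  have htot := hl.2
  rw [sum_split μ (fun i => (2:ℝ) ^ (-(l i)))] at htot
  have := mid_count μ
  linarith

lemma nonemptyFin (μ : ℕ) : Nonempty (Fin (2^(μ+1))) := ⟨zi μ⟩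

lemma rstar_ge (μ : ℕ) (l : Fin (2^(μ+1)) → ℤ) (p : Fin (2^(μ+1)) → ℝ)
    (i : Fin (2^(μ+1))) : (l i : ℝ) + Real.logb 2 (p i) ≤ Rstar (2^(μ+1)) l p := by
  have hb : BddAbove (Set.range fun j : Fin (2^(μ+1)) => ((l j : ℝ) + Real.logb 2 (p j))) :=
    Set.Finite.bddAbove (Set.finite_range _)
  exact le_ciSup hb i

/-- upper bound on RstarOpt -/
lemma ropt_lt_one (μ : ℕ) (p : Fin (2^(μ+1)) → ℝ)
    (hpos : ∀ i, 0 < p i) (hmax : ∀ i, p i ≤ p (zi μ))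
    (hlt : p (zi μ) < (2:ℝ)^(-(μ:ℤ))) :
    RstarOpt (2^(μ+1)) p < 1 := by
  haveI := nonemptyFin μ
  have hp0 : 0 < p (zi μ) := hpos _
  have hclv : IsCLV (2^(μ+1)) (fun _ => (μ:ℤ) + 1) := by
    constructor
    · intro i; show (1:ℤ) ≤ (μ:ℤ) + 1; omega
    · have h1 : ∀ _i : Fin (2^(μ+1)), (2:ℝ) ^ (-((μ:ℤ) + 1)) = (2:ℝ)^(-(μ:ℤ)-1) := by
        intro i; rw [show -((μ:ℤ)+1) = -(μ:ℤ)-1 by ring]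
      have : ∑ _i : Fin (2^(μ+1)), (2:ℝ) ^ (-(μ:ℤ)-1) =
          ((2^(μ+1) : ℕ) : ℝ) * (2:ℝ)^(-(μ:ℤ)-1) := by
        rw [Finset.sum_const, nsmul_eq_mul, card_univ, Fintype.card_fin]
      rw [show (∑ _i : Fin (2^(μ+1)), (2:ℝ) ^ (-((μ:ℤ) + 1))) =
          ∑ _i : Fin (2^(μ+1)), (2:ℝ) ^ (-(μ:ℤ)-1) from
          Finset.sum_congr rfl (fun i _ => h1 i), this, npow_mul_zpow]
  have hub : Rstar (2^(μ+1)) (fun _ => (μ:ℤ) + 1) p ≤ (μ:ℝ) + 1 + Real.logb 2 (p (zi μ)) := by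
    apply ciSup_le
    intro i
    have h1 : Real.logb 2 (p i) ≤ Real.logb 2 (p (zi μ)) :=
      Real.logb_le_logb_of_le (by norm_num) (hpos i) (hmax i)
    push_cast
    linarith
  have hlog : Real.logb 2 (p (zi μ)) < -(μ:ℝ) := by
    have h2 := Real.logb_lt_logb (b := 2) (by norm_num) hp0 hlt
    rw [logb_two_zpow] at h2
    exact_mod_cast h2
  have hmem : Rstar (2^(μ+1)) (fun _ => (μ:ℤ) + 1) p ∈
      {r : ℝ | ∃ l : Fin (2^(μ+1)) → ℤ, IsCLV (2^(μ+1)) l ∧ Rstar (2^(μ+1)) l p = r} :=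
    ⟨_, hclv, rfl⟩
  have hbdd : BddBelow {r : ℝ | ∃ l : Fin (2^(μ+1)) → ℤ, IsCLV (2^(μ+1)) l ∧
      Rstar (2^(μ+1)) l p = r} := by
    refine ⟨1 + Real.logb 2 (p (zi μ)), ?_⟩
    rintro r ⟨l, hl, rfl⟩
    have h1 : (1:ℝ) ≤ (l (zi μ) : ℝ) := by exact_mod_cast hl.1 (zi μ)
    linarith [rstar_ge μ l p (zi μ)]
  have hle := csInf_le hbdd hmem
  calc RstarOpt (2^(μ+1)) p ≤ Rstar (2^(μ+1)) (fun _ => (μ:ℤ) + 1) p := hle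
    _ ≤ (μ:ℝ) + 1 + Real.logb 2 (p (zi μ)) := hub
    _ < 1 := by linarith

/-- main conclusion lemma -/
lemma main_lemma (μ : ℕ) (hμ : 1 ≤ μ) (p : Fin (2^(μ+1)) → ℝ)
    (hmid : ∀ i : Fin (2^(μ+1)), 0 < i.val → i.val < 2^(μ+1) - 1 → p i = (2:ℝ)^(-(μ:ℤ)-1))
    (hpos : ∀ i, 0 < p i) (hmax : ∀ i, p i ≤ p (zi μ))
    (hlt : p (zi μ) < (2:ℝ)^(-(μ:ℤ))) :
    ∀ l : Fin (2^(μ+1)) → ℤ, IsCLV (2^(μ+1)) l →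
      Rstar (2^(μ+1)) l p = RstarOpt (2^(μ+1)) p → (μ:ℤ) < l (zi μ) := by
  intro l hl heq
  by_contra h
  push_neg at h
  obtain ⟨i, hi, hli⟩ := kraft_lemma μ hμ l hl h
  rw [mem_mid] at hi
  have hpi := hmid i hi.1 hi.2
  have h1 : (1:ℝ) ≤ (l i : ℝ) + Real.logb 2 (p i) := by
    rw [hpi, logb_two_zpow]
    have : ((μ:ℝ) + 2) ≤ (l i : ℝ) := by exact_mod_cast hli
    push_cast
    linarith
  have h2 := rstar_ge μ l p i
  have h3 := ropt_lt_one μ p hpos hmax hlt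
  rw [heq] at h2
  linarith

lemma zpow_lt (μ : ℕ) : (2:ℝ)^(-(μ:ℤ)-1) < (2:ℝ)^(-(μ:ℤ)) := by
  have h1 := zpow_split μ
  have h2 := two_zpow_pos (-(μ:ℤ)-1)
  linarith

lemma unif_source (μ : ℕ) (p : Fin (2^(μ+1)) → ℝ) (hp : ∀ i, p i = (2:ℝ)^(-(μ:ℤ)-1)) :
    IsSource (2^(μ+1)) p := by
  refine ⟨fun i => by rw [hp]; exact two_zpow_pos _, ?_, fun i j _ => by rw [hp i, hp j]⟩
  rw [Finset.sum_congr rfl (fun i _ => hp i), Finset.sum_const, nsmul_eq_mul, card_univ,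
    Fintype.card_fin]
  exact npow_mul_zpow μ

lemma unif_main (μ : ℕ) (hμ : 1 ≤ μ) (p : Fin (2^(μ+1)) → ℝ)
    (hp : ∀ i, p i = (2:ℝ)^(-(μ:ℤ)-1)) :
    ∀ l : Fin (2^(μ+1)) → ℤ, IsCLV (2^(μ+1)) l →
      Rstar (2^(μ+1)) l p = RstarOpt (2^(μ+1)) p → (μ:ℤ) < l (zi μ) :=
  main_lemma μ hμ p (fun i _ _ => hp i) (fun i => by rw [hp]; exact two_zpow_pos _)
    (fun i => by rw [hp i, hp (zi μ)]) (by rw [hp]; exact zpow_lt μ)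

lemma case1 (μ : ℕ) (hμ : 1 ≤ μ) (p₁ : ℝ)
    (h1 : (2:ℝ)^(-(μ:ℤ)-1) < p₁) (h2 : p₁ < (2:ℝ)^(-(μ:ℤ)))
    (p : Fin (2^(μ+1)) → ℝ)
    (hp0 : p (zi μ) = p₁)
    (hmid : ∀ i : Fin (2^(μ+1)), 0 < i.val → i.val < 2^(μ+1) - 1 → p i = (2:ℝ)^(-(μ:ℤ)-1))
    (hlast : p (wi μ) = (2:ℝ)^(-(μ:ℤ)) - p₁) :
    IsSource (2^(μ+1)) p ∧
      ∀ l : Fin (2^(μ+1)) → ℤ, IsCLV (2^(μ+1)) l →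
        Rstar (2^(μ+1)) l p = RstarOpt (2^(μ+1)) p → (μ:ℤ) < l (zi μ) := by
  have ht := two_zpow_pos (-(μ:ℤ)-1)
  have hs := zpow_split μ
  have h4 := four_le μ hμ
  have hzi : ∀ i : Fin (2^(μ+1)), i.val = 0 → i = zi μ := fun i h => Fin.ext h
  have hwi : ∀ i : Fin (2^(μ+1)), i.val = 2^(μ+1) - 1 → i = wi μ := fun i h => Fin.ext h
  have hcases : ∀ i : Fin (2^(μ+1)), i = zi μ ∨ (0 < i.val ∧ i.val < 2^(μ+1)-1) ∨ i = wi μ := by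
    intro i
    have := i.isLt
    rcases Nat.lt_or_ge 0 i.val with h | h
    · rcases Nat.lt_or_ge i.val (2^(μ+1)-1) with h' | h'
      · exact Or.inr (Or.inl ⟨h, h'⟩)
      · exact Or.inr (Or.inr (hwi i (by omega)))
    · exact Or.inl (hzi i (by omega))
  have hmax : ∀ i, p i ≤ p (zi μ) := by
    intro i
    rcases hcases i with h | h | h
    · rw [h]
    · rw [hmid i h.1 h.2, hp0]; linarith
    · rw [h, hlast, hp0]; linarith
  have hpos : ∀ i, 0 < p i := by
    intro i
    rcases hcases i with h | h | h
    · rw [h, hp0]; linarith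
    · rw [hmid i h.1 h.2]; exact ht
    · rw [h, hlast]; linarith
  refine ⟨⟨hpos, ?_, ?_⟩, main_lemma μ hμ p hmid hpos hmax (by rw [hp0]; exact h2)⟩
  · rw [sum_split μ p, hp0, hlast,
      Finset.sum_congr rfl (fun i hi => hmid i (mem_mid.mp hi).1 (mem_mid.mp hi).2),
      Finset.sum_const, nsmul_eq_mul, card_mid]
    have := mid_count μ
    linarith
  · intro i j hij
    have hij' : i.val ≤ j.val := hij
    rcases hcases i with h | h | h
    · rw [h]; exact hmax j
    · have hj0 : 0 < j.val := lt_of_lt_of_le h.1 hij'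
      rcases Nat.lt_or_ge j.val (2^(μ+1)-1) with h' | h'
      · rw [hmid i h.1 h.2, hmid j hj0 h']
      · rw [hwi j (by have := j.isLt; omega), hlast, hmid i h.1 h.2]; linarith
    · have hj : j = wi μ := by
        apply hwi
        have hjlt := j.isLt
        rw [h] at hij'
        simp only [wi] at hij'
        omega
      rw [hj, h]

end S16

theorem stmt16 (ν : ℕ) (hν : 1 ≤ ν) :
    (∀ p₁ : ℝ, 0 < p₁ → p₁ < (2:ℝ) ^ (-(ν:ℤ)) →
      ∃ (n : ℕ) (hn : 2 ≤ n) (p : Fin n → ℝ), IsSource n p ∧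
        p ⟨0, by omega⟩ = p₁ ∧
        ∀ l : Fin n → ℤ, IsCLV n l → Rstar n l p = RstarOpt n p →
          (ν:ℤ) < l ⟨0, by omega⟩) ∧
    (∀ p₁ : ℝ, (2:ℝ) ^ (-(ν:ℤ) - 1) < p₁ → p₁ < (2:ℝ) ^ (-(ν:ℤ)) →
      ∀ p : Fin (2 ^ (ν + 1)) → ℝ,
        p ⟨0, Nat.two_pow_pos (ν + 1)⟩ = p₁ →
        (∀ i : Fin (2 ^ (ν + 1)), 0 < i.val → i.val < 2 ^ (ν + 1) - 1 →
          p i = (2:ℝ) ^ (-(ν:ℤ) - 1)) →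
        p ⟨2 ^ (ν + 1) - 1, by have := Nat.two_pow_pos (ν + 1); omega⟩ =
          (2:ℝ) ^ (-(ν:ℤ)) - p₁ →
        IsSource (2 ^ (ν + 1)) p ∧
          ∀ l : Fin (2 ^ (ν + 1)) → ℤ, IsCLV (2 ^ (ν + 1)) l →
            Rstar (2 ^ (ν + 1)) l p = RstarOpt (2 ^ (ν + 1)) p →
            (ν:ℤ) < l ⟨0, Nat.two_pow_pos (ν + 1)⟩) ∧
    (∀ p : Fin (2 ^ (ν + 1)) → ℝ, (∀ i, p i = (2:ℝ) ^ (-(ν:ℤ) - 1)) →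
      ∀ l : Fin (2 ^ (ν + 1)) → ℤ, IsCLV (2 ^ (ν + 1)) l →
        Rstar (2 ^ (ν + 1)) l p = RstarOpt (2 ^ (ν + 1)) p →
        (ν:ℤ) < l ⟨0, Nat.two_pow_pos (ν + 1)⟩) := by
  have key2 := S16.case1 ν hν
  have key3 := fun p hp => S16.unif_main ν hν p hp
  refine ⟨?_, key2, key3⟩
  intro p₁ hp1 hp2
  have hex : ∃ k : ℕ, (2:ℝ)^(-(k:ℤ)-1) ≤ p₁ := by
    obtain ⟨N, hN⟩ := exists_nat_gt (1/p₁)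
    refine ⟨N, le_of_lt ?_⟩
    have hNp : (N:ℝ) < 2^N := by exact_mod_cast (Nat.lt_two_pow_self (n := N))
    have h2N : (0:ℝ) < 2^N := by positivity
    have h1 : 1/p₁ < 2^N := lt_trans hN hNp
    have h2 : 1 < 2^N * p₁ := by
      rw [div_lt_iff₀ hp1] at h1; linarith
    have h3 : ((2:ℝ)^N)⁻¹ < p₁ := by
      rw [inv_lt_iff_one_lt_mul₀ h2N]; linarith
    calc (2:ℝ)^(-(N:ℤ)-1) < (2:ℝ)^(-(N:ℤ)) := S16.zpow_lt N
      _ = ((2:ℝ)^N)⁻¹ := by rw [zpow_neg, zpow_natCast]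
      _ < p₁ := h3
  set μ := Nat.find hex with hμdef
  have hfind : (2:ℝ)^(-(μ:ℤ)-1) ≤ p₁ := Nat.find_spec hex
  have hνμ : ν ≤ μ := by
    by_contra hcon
    push_neg at hcon
    have hle : (2:ℝ)^(-(ν:ℤ)) ≤ (2:ℝ)^(-(μ:ℤ)-1) := by
      apply zpow_le_zpow_right₀ (by norm_num)
      omega
    linarith
  have hμ1 : 1 ≤ μ := le_trans hν hνμ
  have hlt : p₁ < (2:ℝ)^(-(μ:ℤ)) := by
    have hmin := Nat.find_min hex (show μ - 1 < μ by omega)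
    push_neg at hmin
    have hcast : (-((μ-1 : ℕ):ℤ)-1) = -(μ:ℤ) := by
      have : ((μ-1:ℕ):ℤ) = (μ:ℤ) - 1 := by
        push_cast [Nat.cast_sub hμ1]; ring
      rw [this]; ring
    rwa [hcast] at hmin
  have hn2 : 2 ≤ 2^(μ+1) := by
    calc (2:ℕ) = 2^1 := by norm_num
    _ ≤ 2^(μ+1) := Nat.pow_le_pow_right (by norm_num) (by omega)
  have hcast : (ν:ℤ) ≤ (μ:ℤ) := by exact_mod_cast hνμ
  rcases eq_or_lt_of_le hfind with heq | hstrict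
  · -- uniform case
    refine ⟨2^(μ+1), hn2, fun _ => (2:ℝ)^(-(μ:ℤ)-1),
      S16.unif_source μ _ (fun _ => rfl), heq, ?_⟩
    intro l hl hr
    have := S16.unif_main μ hμ1 _ (fun _ => rfl) l hl hr
    exact lt_of_le_of_lt hcast this
  · -- strict case
    set p : Fin (2^(μ+1)) → ℝ := fun i =>
      if i.val = 0 then p₁ else if i.val = 2^(μ+1)-1 then (2:ℝ)^(-(μ:ℤ)) - p₁
      else (2:ℝ)^(-(μ:ℤ)-1) with hpdef
    have h4 := S16.four_le μ hμ1
    have hp0 : p (S16.zi μ) = p₁ := by simp [hpdef, S16.zi]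
    have hmid : ∀ i : Fin (2^(μ+1)), 0 < i.val → i.val < 2^(μ+1) - 1 →
        p i = (2:ℝ)^(-(μ:ℤ)-1) := by
      intro i hi1 hi2
      simp only [hpdef]
      rw [if_neg (by omega), if_neg (by omega)]
    have hlast : p (S16.wi μ) = (2:ℝ)^(-(μ:ℤ)) - p₁ := by
      simp only [hpdef, S16.wi]
      rw [if_neg (by omega)]; simp
    obtain ⟨hsrc, hmain⟩ := S16.case1 μ hμ1 p₁ hstrict hlt p hp0 hmid hlast
    refine ⟨2^(μ+1), hn2, p, hsrc, hp0, ?_⟩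
    intro l hl hr
    exact lt_of_le_of_lt hcast (hmain l hl hr)
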